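/- arXiv:1805.07571 — 10 statements merged into one kernel-verified Lean document; each statement's English description precedes it below -/
import Mathlib

section
/- Let k, f0, T0, m0, A1, A2, λ be real numbers with f0 ≠ 0, m0 ≠ 0 and m0·λ² = 4T0 − 2k³/f0³. Define EI(x) = k³x⁶/(8f0³), T(x) = T0·x² − 3k³x⁴/(4f0³) and m(x) = m0/x². Then the function u(x,t) = e^{−2/x}·(A1·e^{λt} + A2·e^{−λt}) satisfies the Euler–Bernoulli beam equation with axial load at every x > 0 and every t ∈ ℝ. (This is case (a.1) of Table 1, where λ = √2·√(2f0³T0 − k³)/(f0^{3/2}√m0), so that λ² = 2(2f0³T0 − k³)/(f0³m0).) -/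
/-- derivative of `exp (-2/x)` -/
lemma beamAux_he {x : ℝ} (hx : x ≠ 0) :
    HasDerivAt (fun y : ℝ => Real.exp (-2 / y)) (2 / x ^ 2 * Real.exp (-2 / x)) x := by
  have h1 : HasDerivAt (fun y : ℝ => -2 / y) (2 / x ^ 2) x := by
    have h := (hasDerivAt_inv hx).const_mul (-2 : ℝ)
    refine h.congr_deriv ?_
    field_simp
  simpa [mul_comm] using h1.exp

/-- derivative of `P(x) * exp(-2/x) * h` -/
lemma beamAux_hde {x h q : ℝ} (hx : x ≠ 0) {P : ℝ → ℝ} (hP : HasDerivAt P q x) :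
    HasDerivAt (fun y : ℝ => P y * Real.exp (-2 / y) * h)
      ((q + P x * (2 / x ^ 2)) * Real.exp (-2 / x) * h) x := by
  have := (hP.mul (beamAux_he hx)).mul_const h
  refine this.congr_deriv ?_
  ring

lemma beamAux_deriv_congr {f g : ℝ → ℝ} {x : ℝ} (hx : 0 < x)
    (h : ∀ y ∈ Set.Ioi (0:ℝ), f y = g y) : deriv f x = deriv g x :=
  Filter.EventuallyEq.deriv_eq (Filter.eventuallyEq_of_mem (isOpen_Ioi.mem_nhds hx) h)



/-- The left-hand side of the Euler–Bernoulli beam equation with axial load: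
`∂²/∂x²(EI(x)·u_xx) + m(x)·u_tt − ∂/∂x(T(x)·u_x)` evaluated at `(x, t)`. -/
noncomputable def beamLHS (EI m T : ℝ → ℝ) (u : ℝ → ℝ → ℝ) (x t : ℝ) : ℝ :=
  deriv (deriv (fun y => EI y * deriv (deriv (fun z => u z t)) y)) x
    + m x * deriv (deriv (fun s => u x s)) t
    - deriv (fun y => T y * deriv (fun z => u z t) y) x

/-- Case (a.1) of Table 1: with `EI(x) = k³x⁶/(8f0³)`, `T(x) = T0·x² − 3k³x⁴/(4f0³)`,
`m(x) = m0/x²`, and `m0·λ² = 4T0 − 2k³/f0³`, the function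
`u(x,t) = e^{−2/x}·(A1·e^{λt} + A2·e^{−λt})` satisfies the axially loaded
Euler–Bernoulli beam equation for all `x > 0` and all `t`. -/
theorem beam_case_a1_solution (k f0 T0 m0 A1 A2 lam : ℝ)
    (hf0 : f0 ≠ 0) (hm0 : m0 ≠ 0)
    (hlam : m0 * lam ^ 2 = 4 * T0 - 2 * k ^ 3 / f0 ^ 3)
    (EI T m : ℝ → ℝ) (u : ℝ → ℝ → ℝ)
    (hEI : ∀ x, EI x = k ^ 3 * x ^ 6 / (8 * f0 ^ 3))
    (hT : ∀ x, T x = T0 * x ^ 2 - 3 * k ^ 3 * x ^ 4 / (4 * f0 ^ 3))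
    (hm : ∀ x, m x = m0 / x ^ 2)
    (hu : ∀ x t, u x t =
      Real.exp (-2 / x) * (A1 * Real.exp (lam * t) + A2 * Real.exp (-(lam * t)))) :
    ∀ x > (0 : ℝ), ∀ t : ℝ, beamLHS EI m T u x t = 0 := by
  intro x hx t
  have hxne : x ≠ 0 := ne_of_gt hx
  set c : ℝ := k ^ 3 / (8 * f0 ^ 3) with hc
  set h : ℝ := A1 * Real.exp (lam * t) + A2 * Real.exp (-(lam * t)) with hh
  -- first spatial derivative of u
  have hd1 : ∀ y ∈ Set.Ioi (0:ℝ), deriv (fun z => u z t) y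
      = (2 / y ^ 2) * Real.exp (-2 / y) * h := by
    intro y hy
    have hyne : y ≠ 0 := ne_of_gt hy
    have hfun : (fun z => u z t) = fun z => Real.exp (-2 / z) * h := by
      funext z; exact hu z t
    rw [hfun]
    have H := (beamAux_he hyne).mul_const h
    rw [H.deriv]
  -- second spatial derivative of u
  have hd2 : ∀ y ∈ Set.Ioi (0:ℝ), deriv (deriv (fun z => u z t)) y
      = (4 / y ^ 4 - 4 / y ^ 3) * Real.exp (-2 / y) * h := by
    intro y hy
    have hyne : y ≠ 0 := ne_of_gt hy
    rw [beamAux_deriv_congr hy hd1]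
    have hP : HasDerivAt (fun z : ℝ => (2:ℝ) / z ^ 2) (-4 / y ^ 3) y := by
      have := ((hasDerivAt_pow 2 y).inv (pow_ne_zero 2 hyne)).const_mul (2:ℝ)
      refine this.congr_deriv ?_
      push_cast; field_simp; ring
    have H := beamAux_hde (h := h) hyne hP
    rw [H.deriv]
    have : (-4 / y ^ 3 + 2 / y ^ 2 * (2 / y ^ 2)) = 4 / y ^ 4 - 4 / y ^ 3 := by
      field_simp; ring
    rw [this]
  -- EI * u_xx simplified on Ioi 0
  have hw : ∀ y ∈ Set.Ioi (0:ℝ), EI y * deriv (deriv (fun z => u z t)) y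
      = (c * (4 * y ^ 2 - 4 * y ^ 3)) * Real.exp (-2 / y) * h := by
    intro y hy
    have hyne : y ≠ 0 := ne_of_gt hy
    rw [hd2 y hy, hEI, hc]
    field_simp
  -- first derivative of EI * u_xx
  have hw1 : ∀ y ∈ Set.Ioi (0:ℝ),
      deriv (fun z => EI z * deriv (deriv (fun w => u w t)) z) y
      = (c * (8 - 12 * y ^ 2)) * Real.exp (-2 / y) * h := by
    intro y hy
    have hyne : y ≠ 0 := ne_of_gt hy
    rw [beamAux_deriv_congr hy hw]
    have hP : HasDerivAt (fun z : ℝ => c * (4 * z ^ 2 - 4 * z ^ 3))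
        (c * (8 * y - 12 * y ^ 2)) y := by
      have h2 : HasDerivAt (fun z : ℝ => z ^ 2) (2 * y) y := by
        simpa using hasDerivAt_pow 2 y
      have h3 : HasDerivAt (fun z : ℝ => z ^ 3) (3 * y ^ 2) y := by
        simpa using hasDerivAt_pow 3 y
      have := (((h2.const_mul (4:ℝ)).sub (h3.const_mul (4:ℝ))).const_mul c)
      refine this.congr_deriv ?_
      ring
    have H := beamAux_hde (h := h) hyne hP
    rw [H.deriv]
    have : (c * (8 * y - 12 * y ^ 2) + c * (4 * y ^ 2 - 4 * y ^ 3) * (2 / y ^ 2))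
        = c * (8 - 12 * y ^ 2) := by
      field_simp; ring
    rw [this]
  -- second derivative of EI * u_xx at x
  have hw2 : deriv (deriv (fun z => EI z * deriv (deriv (fun w => u w t)) z)) x
      = (c * (-24 * x + 16 / x ^ 2 - 24)) * Real.exp (-2 / x) * h := by
    rw [beamAux_deriv_congr hx hw1]
    have hP : HasDerivAt (fun z : ℝ => c * (8 - 12 * z ^ 2)) (c * (-24 * x)) x := by
      have h2 : HasDerivAt (fun z : ℝ => z ^ 2) (2 * x) x := by
        simpa using hasDerivAt_pow 2 x
      have := (((hasDerivAt_const x (8:ℝ)).sub (h2.const_mul (12:ℝ))).const_mul c)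
      refine this.congr_deriv ?_
      ring
    have H := beamAux_hde (h := h) hxne hP
    rw [H.deriv]
    have : (c * (-24 * x) + c * (8 - 12 * x ^ 2) * (2 / x ^ 2))
        = c * (-24 * x + 16 / x ^ 2 - 24) := by
      field_simp; ring
    rw [this]
  -- T * u_x simplified on Ioi 0
  have hv : ∀ y ∈ Set.Ioi (0:ℝ), T y * deriv (fun z => u z t) y
      = ((2 * T0 - 12 * c * y ^ 2)) * Real.exp (-2 / y) * h := by
    intro y hy
    have hyne : y ≠ 0 := ne_of_gt hy
    rw [hd1 y hy, hT, hc]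
    field_simp
    ring
  -- derivative of T * u_x at x
  have hv1 : deriv (fun y => T y * deriv (fun z => u z t) y) x
      = (-24 * c * x + 4 * T0 / x ^ 2 - 24 * c) * Real.exp (-2 / x) * h := by
    rw [beamAux_deriv_congr hx hv]
    have hP : HasDerivAt (fun z : ℝ => 2 * T0 - 12 * c * z ^ 2) (-24 * c * x) x := by
      have h2 : HasDerivAt (fun z : ℝ => z ^ 2) (2 * x) x := by
        simpa using hasDerivAt_pow 2 x
      have := ((hasDerivAt_const x (2 * T0)).sub (h2.const_mul (12 * c)))
      refine this.congr_deriv ?_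
      ring
    have H := beamAux_hde (h := h) hxne hP
    rw [H.deriv]
    have : (-24 * c * x + (2 * T0 - 12 * c * x ^ 2) * (2 / x ^ 2))
        = -24 * c * x + 4 * T0 / x ^ 2 - 24 * c := by
      field_simp; ring
    rw [this]
  -- time derivatives
  have ht2 : deriv (deriv (fun s => u x s)) t
      = Real.exp (-2 / x) * (lam ^ 2 * h) := by
    have hfun : (fun s => u x s)
        = fun s => Real.exp (-2 / x) * (A1 * Real.exp (lam * s) + A2 * Real.exp (-(lam * s))) := by
      funext s; exact hu x s
    rw [hfun]
    have hD1 : ∀ s : ℝ, HasDerivAt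
        (fun s => Real.exp (-2 / x) * (A1 * Real.exp (lam * s) + A2 * Real.exp (-(lam * s))))
        (Real.exp (-2 / x) * (A1 * lam * Real.exp (lam * s) - A2 * lam * Real.exp (-(lam * s)))) s := by
      intro s
      have ha : HasDerivAt (fun s : ℝ => lam * s) lam s := by
        simpa using (hasDerivAt_id s).const_mul lam
      have h1 := ha.exp
      have h2 := ha.neg.exp
      have := ((h1.const_mul A1).add (h2.const_mul A2)).const_mul (Real.exp (-2 / x))
      refine this.congr_deriv ?_
      simp only [Pi.neg_apply]; ring
    have hDfun : deriv (fun s => Real.exp (-2 / x) * (A1 * Real.exp (lam * s) + A2 * Real.exp (-(lam * s))))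
        = fun s => Real.exp (-2 / x) * (A1 * lam * Real.exp (lam * s) - A2 * lam * Real.exp (-(lam * s))) := by
      funext s; exact (hD1 s).deriv
    rw [hDfun]
    have ha : HasDerivAt (fun s : ℝ => lam * s) lam t := by
      simpa using (hasDerivAt_id t).const_mul lam
    have h1 := ha.exp
    have h2 := ha.neg.exp
    have H := ((h1.const_mul (A1 * lam)).sub (h2.const_mul (A2 * lam))).const_mul (Real.exp (-2 / x))
    have H' : HasDerivAt (fun s => Real.exp (-2 / x) * (A1 * lam * Real.exp (lam * s) - A2 * lam * Real.exp (-(lam * s))))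
        (Real.exp (-2 / x) * (A1 * lam * (Real.exp (lam * t) * lam) - A2 * lam * (Real.exp (-(lam * t)) * -lam))) t := H
    rw [H'.deriv, hh]
    ring
  -- combine everything
  unfold beamLHS
  rw [hw2, ht2, hv1, hm]
  have hkey : c * (-24 * x + 16 / x ^ 2 - 24) * Real.exp (-2 / x) * h
      + m0 / x ^ 2 * (Real.exp (-2 / x) * (lam ^ 2 * h))
      - (-24 * c * x + 4 * T0 / x ^ 2 - 24 * c) * Real.exp (-2 / x) * h
      = ((16 * c - 4 * T0 + m0 * lam ^ 2) / x ^ 2) * (Real.exp (-2 / x) * h) := by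
    field_simp
    ring
  rw [hkey, hlam, hc]
  field_simp
  ring
end

section
/- Let K and T0 be real numbers and let φ(x) = e^{−2/x}. Then for every x > 0, d²/dx²(K·x⁶·φ''(x)) − d/dx((T0·x² − 6K·x⁴)·φ'(x)) = (16K − 4T0)·x^{−2}·φ(x). In particular, e^{−2/x} is an eigenfunction (with weight 1/x²) of the static beam operator with sextic stiffness K·x⁶ and axial force T0·x² − 6K·x⁴. -/
/-- The static beam operator `w ↦ (EI·w'')'' − (T·w')'` evaluated at `x`. -/
noncomputable def staticBeamLHS (EI T : ℝ → ℝ) (w : ℝ → ℝ) (x : ℝ) : ℝ :=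
  deriv (deriv (fun y => EI y * deriv (deriv w) y)) x
    - deriv (fun y => T y * deriv w y) x

lemma deriv_congr_ne (f g : ℝ → ℝ) {x : ℝ} (hx : x ≠ 0)
    (h : ∀ y, y ≠ 0 → f y = g y) : deriv f x = deriv g x :=
  Filter.EventuallyEq.deriv_eq
    (Filter.eventually_of_mem (isOpen_ne.mem_nhds hx) h)

lemma hasE (y : ℝ) (hy : y ≠ 0) :
    HasDerivAt (fun z : ℝ => Real.exp (-2 / z))
      (2 * y⁻¹ ^ 2 * Real.exp (-2 / y)) y := by
  have h1 : HasDerivAt (fun z : ℝ => -2 / z) (2 * y⁻¹ ^ 2) y := by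
    have := (hasDerivAt_inv hy).const_mul (-2 : ℝ)
    rw [show (fun z : ℝ => -2 / z) = fun z => -2 * z⁻¹ from funext fun z => div_eq_mul_inv _ _]
    exact this.congr_deriv (by rw [inv_pow]; ring)
  simpa [mul_comm] using h1.exp

lemma hasMulE {a : ℝ → ℝ} {a' y : ℝ} (hy : y ≠ 0) (ha : HasDerivAt a a' y) :
    HasDerivAt (fun z => a z * Real.exp (-2 / z))
      ((a' + a y * (2 * y⁻¹ ^ 2)) * Real.exp (-2 / y)) y := by
  have := ha.mul (hasE y hy)
  exact this.congr_deriv (by ring)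

/-- For `φ(x) = e^{−2/x}` and every `x > 0`,
`d²/dx²(K·x⁶·φ'') − d/dx((T0·x² − 6K·x⁴)·φ') = (16K − 4T0)·x⁻²·φ(x)`:
`e^{−2/x}` is an eigenfunction (with weight `1/x²`) of the static beam operator
with sextic stiffness `K·x⁶` and axial force `T0·x² − 6K·x⁴`. -/
theorem static_beam_sextic_eigenfunction (K T0 : ℝ) (φ : ℝ → ℝ)
    (hφ : ∀ x, φ x = Real.exp (-2 / x)) :
    ∀ x > (0 : ℝ),
      staticBeamLHS (fun y => K * y ^ 6) (fun y => T0 * y ^ 2 - 6 * K * y ^ 4) φ x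
        = (16 * K - 4 * T0) * x ^ (-2 : ℤ) * φ x := by
  intro x hx0
  have hx : x ≠ 0 := ne_of_gt hx0
  have hφE : φ = fun z => Real.exp (-2 / z) := funext hφ
  -- first derivative of φ
  have hd1 : ∀ y, y ≠ 0 → deriv φ y = 2 * y⁻¹ ^ 2 * Real.exp (-2 / y) := by
    intro y hy; rw [hφE]; exact (hasE y hy).deriv
  -- second derivative of φ
  have hd2 : ∀ y, y ≠ 0 →
      deriv (deriv φ) y = (4 * y⁻¹ ^ 4 - 4 * y⁻¹ ^ 3) * Real.exp (-2 / y) := by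
    intro y hy
    rw [deriv_congr_ne _ (fun z => 2 * z⁻¹ ^ 2 * Real.exp (-2 / z)) hy hd1]
    have ha : HasDerivAt (fun z : ℝ => 2 * z⁻¹ ^ 2)
        (2 * ((2 : ℕ) * y⁻¹ ^ (2 - 1) * -(y ^ 2)⁻¹)) y :=
      ((hasDerivAt_inv hy).pow 2).const_mul 2
    rw [(hasMulE hy ha).deriv]
    have h4 : (y ^ 4)⁻¹ = y⁻¹ ^ 4 := (inv_pow y 4).symm
    have h3 : (y ^ 3)⁻¹ = y⁻¹ ^ 3 := (inv_pow y 3).symm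
    field_simp
    ring
    rw [pow_two, mul_assoc y y, mul_inv_cancel₀ hy, mul_one]
  -- first derivative of EI·φ''
  have hA : ∀ y, y ≠ 0 →
      deriv (fun z => K * z ^ 6 * deriv (deriv φ) z) y
        = K * (8 - 12 * y ^ 2) * Real.exp (-2 / y) := by
    intro y hy
    rw [deriv_congr_ne _ (fun z => (K * (4 * z ^ 2 - 4 * z ^ 3)) * Real.exp (-2 / z)) hy
      (by
        intro z hz
        rw [hd2 z hz]
        field_simp)]
    have ha : HasDerivAt (fun z : ℝ => K * (4 * z ^ 2 - 4 * z ^ 3))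
        (K * (4 * ((2 : ℕ) * y ^ (2 - 1)) - 4 * ((3 : ℕ) * y ^ (3 - 1)))) y :=
      (((hasDerivAt_pow 2 y).const_mul 4).sub ((hasDerivAt_pow 3 y).const_mul 4)).const_mul K
    rw [(hasMulE hy ha).deriv]
    field_simp
    ring
  -- second derivative of EI·φ''
  have hA2 : deriv (deriv (fun z => K * z ^ 6 * deriv (deriv φ) z)) x
      = K * (16 * x⁻¹ ^ 2 - 24 - 24 * x) * Real.exp (-2 / x) := by
    rw [deriv_congr_ne _ (fun z => (K * (8 - 12 * z ^ 2)) * Real.exp (-2 / z)) hx hA]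
    have ha : HasDerivAt (fun z : ℝ => K * (8 - 12 * z ^ 2))
        (K * (0 - 12 * ((2 : ℕ) * x ^ (2 - 1)))) x :=
      ((hasDerivAt_const x (8 : ℝ)).sub ((hasDerivAt_pow 2 x).const_mul 12)).const_mul K
    rw [(hasMulE hx ha).deriv]
    field_simp
    ring
  -- derivative of T·φ'
  have hB : deriv (fun z => (T0 * z ^ 2 - 6 * K * z ^ 4) * deriv φ z) x
      = (4 * T0 * x⁻¹ ^ 2 - 24 * K - 24 * K * x) * Real.exp (-2 / x) := by
    rw [deriv_congr_ne _ (fun z => (2 * T0 - 12 * K * z ^ 2) * Real.exp (-2 / z)) hx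
      (by
        intro z hz
        rw [hd1 z hz]
        field_simp
        ring)]
    have ha : HasDerivAt (fun z : ℝ => 2 * T0 - 12 * K * z ^ 2)
        (0 - 12 * K * ((2 : ℕ) * x ^ (2 - 1))) x :=
      (hasDerivAt_const x (2 * T0)).sub ((hasDerivAt_pow 2 x).const_mul (12 * K))
    rw [(hasMulE hx ha).deriv]
    field_simp
    ring
  rw [staticBeamLHS, hA2, hB, hφ x]
  rw [show (x : ℝ) ^ (-2 : ℤ) = x⁻¹ ^ 2 by
    rw [← zpow_natCast x⁻¹ 2, inv_zpow, ← zpow_neg]; norm_num]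
  ring
end

section
/- Let k, f0, T0, m0 be real numbers with f0 ≠ 0 and m0 ≠ 0, and define EI(x) = k³x⁶/(8f0³), T(x) = T0·x² − 3k³x⁴/(4f0³) and m(x) = m0/x². Let F: ℝ → ℝ be twice differentiable. Then u(x,t) = e^{−2/x}·F(t) satisfies the Euler–Bernoulli beam equation with axial load at every x > 0 and t ∈ ℝ if and only if m0·F''(t) = (4T0 − 2k³/f0³)·F(t) for all t ∈ ℝ. (This is the reduction of the PDE to a second-order ODE for F obtained from the similarity ansatz of case (a.1).) -/
lemma hg_deriv (y : ℝ) (hy : y ≠ 0) :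
    HasDerivAt (fun z : ℝ => Real.exp (-2 / z)) (2 / y ^ 2 * Real.exp (-2 / y)) y := by
  have h1 : HasDerivAt (fun z : ℝ => -2 / z) (2 / y ^ 2) y := by
    have := (hasDerivAt_const y (-2 : ℝ)).div (hasDerivAt_id y) hy
    refine this.congr_deriv ?_
    simp only [id]
    ring
  have := h1.exp
  convert this using 1
  ring

set_option maxHeartbeats 3200000 in
lemma beam_key (k f0 T0 m0 : ℝ) (hf0 : f0 ≠ 0)
    (EI T m : ℝ → ℝ) (u : ℝ → ℝ → ℝ) (F : ℝ → ℝ)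
    (hF : Differentiable ℝ F) (hF' : Differentiable ℝ (deriv F))
    (hEI : ∀ x, EI x = k ^ 3 * x ^ 6 / (8 * f0 ^ 3))
    (hT : ∀ x, T x = T0 * x ^ 2 - 3 * k ^ 3 * x ^ 4 / (4 * f0 ^ 3))
    (hm : ∀ x, m x = m0 / x ^ 2)
    (hu : ∀ x t, u x t = Real.exp (-2 / x) * F t)
    (x : ℝ) (hx : x ≠ 0) (t : ℝ) :
    beamLHS EI m T u x t =
      Real.exp (-2 / x) / x ^ 2 *
        (m0 * deriv (deriv F) t - (4 * T0 - 2 * k ^ 3 / f0 ^ 3) * F t) := by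
  -- time part
  have ht1 : (fun s => u x s) = fun s => Real.exp (-2 / x) * F s :=
    funext fun s => hu x s
  have ht2 : deriv (fun s => Real.exp (-2 / x) * F s) = fun s => Real.exp (-2 / x) * deriv F s :=
    funext fun s => deriv_const_mul _ (hF s)
  have ht3 : deriv (deriv (fun s => u x s)) t = Real.exp (-2 / x) * deriv (deriv F) t := by
    rw [ht1, ht2, deriv_const_mul _ (hF' t)]
  -- inner spatial function
  have hinner : (fun z => u z t) = fun z => Real.exp (-2 / z) * F t :=
    funext fun z => hu z t
  have hd1 : ∀ y : ℝ, y ≠ 0 →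
      HasDerivAt (fun z => u z t) (2 / y ^ 2 * Real.exp (-2 / y) * F t) y := by
    intro y hy
    rw [hinner]
    exact (hg_deriv y hy).mul_const _
  have hA1 : ∀ y : ℝ, y ≠ 0 →
      deriv (fun z => u z t) y = 2 / y ^ 2 * Real.exp (-2 / y) * F t :=
    fun y hy => (hd1 y hy).deriv
  -- derivative of A1
  have hA1d : ∀ y : ℝ, y ≠ 0 →
      HasDerivAt (fun z : ℝ => 2 / z ^ 2 * Real.exp (-2 / z) * F t)
        ((4 / y ^ 4 - 4 / y ^ 3) * Real.exp (-2 / y) * F t) y := by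
    intro y hy
    have hp : HasDerivAt (fun z : ℝ => 2 / z ^ 2) (-4 / y ^ 3) y := by
      have := (hasDerivAt_const y (2 : ℝ)).div (hasDerivAt_pow 2 y) (pow_ne_zero 2 hy)
      refine this.congr_deriv ?_
      field_simp
      ring
    have := (hp.mul (hg_deriv y hy)).mul_const (F t)
    refine this.congr_deriv ?_
    field_simp
    ring
  have hA2 : ∀ y : ℝ, y ≠ 0 →
      deriv (deriv (fun z => u z t)) y = (4 / y ^ 4 - 4 / y ^ 3) * Real.exp (-2 / y) * F t := by
    intro y hy
    have hev : deriv (fun z => u z t) =ᶠ[nhds y]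
        (fun z : ℝ => 2 / z ^ 2 * Real.exp (-2 / z) * F t) := by
      filter_upwards [eventually_ne_nhds hy] with z hz using hA1 z hz
    rw [hev.deriv_eq]
    exact (hA1d y hy).deriv
  -- EI * u_xx simplified
  have hBH : ∀ y : ℝ, y ≠ 0 →
      EI y * deriv (deriv (fun z => u z t)) y =
        (k ^ 3 / f0 ^ 3 / 2 * y ^ 2 - k ^ 3 / f0 ^ 3 / 2 * y ^ 3) * Real.exp (-2 / y) * F t := by
    intro y hy
    rw [hA2 y hy, hEI y]
    field_simp
    ring
  have hHd : ∀ y : ℝ, y ≠ 0 →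
      HasDerivAt
        (fun z : ℝ => (k ^ 3 / f0 ^ 3 / 2 * z ^ 2 - k ^ 3 / f0 ^ 3 / 2 * z ^ 3)
          * Real.exp (-2 / z) * F t)
        ((k ^ 3 / f0 ^ 3 - 3 * (k ^ 3 / f0 ^ 3) / 2 * y ^ 2) * Real.exp (-2 / y) * F t) y := by
    intro y hy
    have hp : HasDerivAt
        (fun z : ℝ => k ^ 3 / f0 ^ 3 / 2 * z ^ 2 - k ^ 3 / f0 ^ 3 / 2 * z ^ 3)
        (k ^ 3 / f0 ^ 3 / 2 * (2 * y ^ 1) - k ^ 3 / f0 ^ 3 / 2 * (3 * y ^ 2)) y :=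
      (((hasDerivAt_pow 2 y).const_mul _).sub ((hasDerivAt_pow 3 y).const_mul _))
    have := (hp.mul (hg_deriv y hy)).mul_const (F t)
    refine this.congr_deriv ?_
    field_simp
    ring
  have hB1 : ∀ y : ℝ, y ≠ 0 →
      deriv (fun z => EI z * deriv (deriv (fun w => u w t)) z) y =
        (k ^ 3 / f0 ^ 3 - 3 * (k ^ 3 / f0 ^ 3) / 2 * y ^ 2) * Real.exp (-2 / y) * F t := by
    intro y hy
    have hev : (fun z => EI z * deriv (deriv (fun w => u w t)) z) =ᶠ[nhds y]
        (fun z : ℝ => (k ^ 3 / f0 ^ 3 / 2 * z ^ 2 - k ^ 3 / f0 ^ 3 / 2 * z ^ 3)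
          * Real.exp (-2 / z) * F t) := by
      filter_upwards [eventually_ne_nhds hy] with z hz using hBH z hz
    rw [hev.deriv_eq]
    exact (hHd y hy).deriv
  have hB2 : deriv (deriv (fun z => EI z * deriv (deriv (fun w => u w t)) z)) x =
      (-3 * (k ^ 3 / f0 ^ 3) * x + 2 * (k ^ 3 / f0 ^ 3) / x ^ 2 - 3 * (k ^ 3 / f0 ^ 3))
        * Real.exp (-2 / x) * F t := by
    have hev : deriv (fun z => EI z * deriv (deriv (fun w => u w t)) z) =ᶠ[nhds x]
        (fun z : ℝ => (k ^ 3 / f0 ^ 3 - 3 * (k ^ 3 / f0 ^ 3) / 2 * z ^ 2)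
          * Real.exp (-2 / z) * F t) := by
      filter_upwards [eventually_ne_nhds hx] with z hz using hB1 z hz
    rw [hev.deriv_eq]
    have hp : HasDerivAt
        (fun z : ℝ => k ^ 3 / f0 ^ 3 - 3 * (k ^ 3 / f0 ^ 3) / 2 * z ^ 2)
        (0 - 3 * (k ^ 3 / f0 ^ 3) / 2 * (2 * x ^ 1)) x :=
      (hasDerivAt_const x _).sub ((hasDerivAt_pow 2 x).const_mul _)
    have := (hp.mul (hg_deriv x hx)).mul_const (F t)
    erw [this.deriv]
    field_simp
    ring
  -- T * u_x simplified
  have hCK : ∀ y : ℝ, y ≠ 0 →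
      T y * deriv (fun z => u z t) y =
        (2 * T0 - 3 * (k ^ 3 / f0 ^ 3) / 2 * y ^ 2) * Real.exp (-2 / y) * F t := by
    intro y hy
    rw [hA1 y hy, hT y]
    field_simp
    ring
  have hC : deriv (fun z => T z * deriv (fun w => u w t) z) x =
      (-3 * (k ^ 3 / f0 ^ 3) * x + 4 * T0 / x ^ 2 - 3 * (k ^ 3 / f0 ^ 3))
        * Real.exp (-2 / x) * F t := by
    have hev : (fun z => T z * deriv (fun w => u w t) z) =ᶠ[nhds x]
        (fun z : ℝ => (2 * T0 - 3 * (k ^ 3 / f0 ^ 3) / 2 * z ^ 2) * Real.exp (-2 / z) * F t) := by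
      filter_upwards [eventually_ne_nhds hx] with z hz using hCK z hz
    rw [hev.deriv_eq]
    have hp : HasDerivAt
        (fun z : ℝ => 2 * T0 - 3 * (k ^ 3 / f0 ^ 3) / 2 * z ^ 2)
        (0 - 3 * (k ^ 3 / f0 ^ 3) / 2 * (2 * x ^ 1)) x :=
      (hasDerivAt_const x _).sub ((hasDerivAt_pow 2 x).const_mul _)
    have := (hp.mul (hg_deriv x hx)).mul_const (F t)
    erw [this.deriv]
    field_simp
    ring
  rw [beamLHS, hB2, hC, hm x, ht3]
  field_simp
  ring

/-- Reduction of the beam PDE to an ODE via the similarity ansatz of case (a.1):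
with `EI(x) = k³x⁶/(8f0³)`, `T(x) = T0·x² − 3k³x⁴/(4f0³)`, `m(x) = m0/x²`, and `F`
twice differentiable, `u(x,t) = e^{−2/x}·F(t)` satisfies the beam equation for all
`x > 0`, `t ∈ ℝ` iff `m0·F''(t) = (4T0 − 2k³/f0³)·F(t)` for all `t`. -/
theorem beam_case_a1_reduction (k f0 T0 m0 : ℝ) (hf0 : f0 ≠ 0) (hm0 : m0 ≠ 0)
    (EI T m : ℝ → ℝ) (u : ℝ → ℝ → ℝ) (F : ℝ → ℝ)
    (hF : Differentiable ℝ F) (hF' : Differentiable ℝ (deriv F))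
    (hEI : ∀ x, EI x = k ^ 3 * x ^ 6 / (8 * f0 ^ 3))
    (hT : ∀ x, T x = T0 * x ^ 2 - 3 * k ^ 3 * x ^ 4 / (4 * f0 ^ 3))
    (hm : ∀ x, m x = m0 / x ^ 2)
    (hu : ∀ x t, u x t = Real.exp (-2 / x) * F t) :
    (∀ x > (0 : ℝ), ∀ t : ℝ, beamLHS EI m T u x t = 0) ↔
      (∀ t : ℝ, m0 * deriv (deriv F) t = (4 * T0 - 2 * k ^ 3 / f0 ^ 3) * F t) := by
  constructor
  · intro h t
    have h1 := h 1 one_pos t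
    rw [beam_key k f0 T0 m0 hf0 EI T m u F hF hF' hEI hT hm hu 1 one_ne_zero t] at h1
    have hne : Real.exp (-2 / (1 : ℝ)) / (1 : ℝ) ^ 2 ≠ 0 := by
      positivity
    have := (mul_eq_zero.mp h1).resolve_left hne
    linarith [this]
  · intro h x hx t
    rw [beam_key k f0 T0 m0 hf0 EI T m u F hF hF' hEI hT hm hu x (ne_of_gt hx) t, h t,
      sub_self, mul_zero]
end

section
/- Let a0 ≠ 0, a1 ≠ 0 be real, let m: ℝ → ℝ be any continuous function, and define EI(x) = a1·e^{a0·x} and T(x) = −(2/9)·a0²·a1·e^{a0·x}. Let s, A1, A2 be real with (A1, A2) ≠ (0,0). Then u(x,t) = e^{s·x}·(A1 + A2·t) satisfies the Euler–Bernoulli beam equation with axial load at every (x,t) ∈ ℝ² if and only if s·(s + a0)·(s + a0/3)·(s + 2a0/3) = 0. In particular, u(x,t) = e^{−a0·x/3}·(A1 + A2·t) is a solution (case (a.2) of Table 1). -/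
lemma deriv_exp_lin (b c : ℝ) :
    deriv (fun y => Real.exp (b * y) * c) = fun y => Real.exp (b * y) * (c * b) := by
  funext y
  have h : HasDerivAt (fun z => Real.exp (b * z)) (Real.exp (b * y) * b) y := by
    simpa [Function.comp_def] using (Real.hasDerivAt_exp (b * y)).comp y ((hasDerivAt_id y).const_mul b)
  rw [(h.mul_const c).deriv]; ring

lemma beam_formula (a0 a1 : ℝ) (m EI T : ℝ → ℝ)
    (hEI : ∀ x, EI x = a1 * Real.exp (a0 * x))
    (hT : ∀ x, T x = -(2 / 9) * a0 ^ 2 * a1 * Real.exp (a0 * x))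
    (s A1 A2 x t : ℝ) :
    beamLHS EI m T (fun x t => Real.exp (s * x) * (A1 + A2 * t)) x t
      = Real.exp ((a0 + s) * x) * a1 * (A1 + A2 * t)
          * (s * (s + a0) * (s + a0 / 3) * (s + 2 * a0 / 3)) := by
  unfold beamLHS
  beta_reduce
  set c := A1 + A2 * t with hc
  have ht1 : deriv (fun τ => Real.exp (s * x) * (A1 + A2 * τ))
      = fun _ => Real.exp (s * x) * A2 := by
    funext τ
    have h : HasDerivAt (fun τ => Real.exp (s * x) * (A1 + A2 * τ))
        (Real.exp (s * x) * A2) τ := by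
      simpa using ((((hasDerivAt_id τ).const_mul A2).const_add A1).const_mul (Real.exp (s * x)))
    exact h.deriv
  have ht2 : deriv (deriv (fun τ => Real.exp (s * x) * (A1 + A2 * τ))) t = 0 := by
    rw [ht1]; simp
  have h1 : deriv (deriv (fun z => Real.exp (s * z) * c))
      = fun y => Real.exp (s * y) * (c * s * s) := by
    rw [deriv_exp_lin s c, deriv_exp_lin s (c * s)]
  have hEIfun : (fun y => EI y * (Real.exp (s * y) * (c * s * s)))
      = fun y => Real.exp ((a0 + s) * y) * (a1 * (c * s * s)) := by
    funext y; rw [hEI, show (a0 + s) * y = a0 * y + s * y from by ring, Real.exp_add]; ring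
  have hTfun : (fun y => T y * (Real.exp (s * y) * (c * s)))
      = fun y => Real.exp ((a0 + s) * y) * (-(2 / 9) * a0 ^ 2 * a1 * (c * s)) := by
    funext y; rw [hT, show (a0 + s) * y = a0 * y + s * y from by ring, Real.exp_add]; ring
  rw [h1, deriv_exp_lin s c, hEIfun, hTfun, deriv_exp_lin, deriv_exp_lin, deriv_exp_lin, ht2]
  ring

/-- Case (a.2) of Table 1: with `EI(x) = a1·e^{a0·x}`, `T(x) = −(2/9)·a0²·a1·e^{a0·x}`,
and any continuous mass `m`, the function `u(x,t) = e^{s·x}·(A1 + A2·t)` (with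
`(A1,A2) ≠ (0,0)`) solves the beam equation everywhere iff
`s·(s + a0)·(s + a0/3)·(s + 2a0/3) = 0`; in particular
`u(x,t) = e^{−a0·x/3}·(A1 + A2·t)` is a solution. -/
theorem beam_case_a2 (a0 a1 : ℝ) (ha0 : a0 ≠ 0) (ha1 : a1 ≠ 0)
    (m : ℝ → ℝ) (hm : Continuous m) (EI T : ℝ → ℝ)
    (hEI : ∀ x, EI x = a1 * Real.exp (a0 * x))
    (hT : ∀ x, T x = -(2 / 9) * a0 ^ 2 * a1 * Real.exp (a0 * x))
    (s A1 A2 : ℝ) (hA : (A1, A2) ≠ (0, 0)) :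
    ((∀ x t : ℝ,
        beamLHS EI m T (fun x t => Real.exp (s * x) * (A1 + A2 * t)) x t = 0) ↔
      s * (s + a0) * (s + a0 / 3) * (s + 2 * a0 / 3) = 0)
    ∧ (∀ x t : ℝ,
        beamLHS EI m T (fun x t => Real.exp (-a0 * x / 3) * (A1 + A2 * t)) x t = 0) := by
  constructor
  · constructor
    · intro h
      -- choose t with A1 + A2 * t ≠ 0
      obtain ⟨t, ht⟩ : ∃ t, A1 + A2 * t ≠ 0 := by
        by_cases h2 : A2 = 0
        · refine ⟨0, ?_⟩
          have h1 : A1 ≠ 0 := by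
            intro h1; exact hA (by simp [h1, h2])
          simpa [h2] using h1
        · exact ⟨(1 - A1) / A2, by field_simp; norm_num⟩
      have := h 0 t
      rw [beam_formula a0 a1 m EI T hEI hT s A1 A2 0 t] at this
      have he : Real.exp ((a0 + s) * 0) = 1 := by simp
      rw [he] at this
      rcases mul_eq_zero.1 this with h' | h'
      · rcases mul_eq_zero.1 h' with h'' | h''
        · rcases mul_eq_zero.1 h'' with h3 | h3
          · simp at h3
          · exact absurd h3 ha1
        · exact absurd h'' ht
      · exact h'
    · intro h x t
      rw [beam_formula a0 a1 m EI T hEI hT s A1 A2 x t, h, mul_zero]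
  · intro x t
    have hfun : (fun x t => Real.exp (-a0 * x / 3) * (A1 + A2 * t))
        = fun x t => Real.exp (-a0 / 3 * x) * (A1 + A2 * t) := by
      funext x t; ring_nf
    rw [hfun, beam_formula a0 a1 m EI T hEI hT (-a0 / 3) A1 A2 x t]
    have : -a0 / 3 + a0 / 3 = 0 := by ring
    rw [this]
    ring
end

section
/- Let v ≠ 0 and a1 be real numbers, let m: ℝ → ℝ be any continuous function, and define EI(x) = a1·e^{−v·x} and T(x) = 2·a1·v²·e^{−v·x}. Then for all real constants A1, A2, the function u(x,t) = e^{2v·x}·(A1 + A2·t) satisfies the Euler–Bernoulli beam equation with axial load at every (x,t) ∈ ℝ². (This is case (b) of Table 1.) -/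
lemma deriv_exp_mul_const (k c : ℝ) :
    deriv (fun z : ℝ => Real.exp (k * z) * c) = fun x => Real.exp (k * x) * (k * c) := by
  funext x
  have h : HasDerivAt (fun z : ℝ => Real.exp (k * z) * c) (Real.exp (k * x) * (k * c)) x := by
    have h1 : HasDerivAt (fun z : ℝ => k * z) k x := by simpa using (hasDerivAt_id x).const_mul k
    have h2 := (h1.exp.mul_const c)
    refine h2.congr_deriv ?_
    ring
  exact h.deriv

lemma deriv_lin (C A1 A2 : ℝ) :
    deriv (fun s : ℝ => C * (A1 + A2 * s)) = fun _ => C * A2 := by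
  funext s
  have h1 : HasDerivAt (fun s : ℝ => A1 + A2 * s) A2 s := by
    simpa using ((hasDerivAt_id s).const_mul A2).const_add A1
  have h2 := h1.const_mul C
  exact h2.deriv

/-- Case (b) of Table 1: with `EI(x) = a1·e^{−v·x}`, `T(x) = 2·a1·v²·e^{−v·x}`, and
any continuous mass `m`, the function `u(x,t) = e^{2v·x}·(A1 + A2·t)` satisfies the
axially loaded Euler–Bernoulli beam equation at every `(x,t) ∈ ℝ²`. -/
theorem beam_case_b_solution (v a1 : ℝ) (hv : v ≠ 0)
    (m : ℝ → ℝ) (hm : Continuous m) (EI T : ℝ → ℝ) (u : ℝ → ℝ → ℝ)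
    (hEI : ∀ x, EI x = a1 * Real.exp (-v * x))
    (hT : ∀ x, T x = 2 * a1 * v ^ 2 * Real.exp (-v * x))
    (A1 A2 : ℝ)
    (hu : ∀ x t, u x t = Real.exp (2 * v * x) * (A1 + A2 * t)) :
    ∀ x t : ℝ, beamLHS EI m T u x t = 0 := by
  intro x t
  set c := A1 + A2 * t with hc
  have hx : (fun z => u z t) = fun z => Real.exp ((2 * v) * z) * c := by
    funext z; rw [hu]
  have hux : deriv (fun z => u z t) = fun y => Real.exp ((2 * v) * y) * ((2 * v) * c) := by
    rw [hx, deriv_exp_mul_const]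
  have huxx : deriv (deriv (fun z => u z t))
      = fun y => Real.exp ((2 * v) * y) * ((2 * v) * ((2 * v) * c)) := by
    rw [hux, deriv_exp_mul_const]
  -- EI term
  have hEIfun : (fun y => EI y * deriv (deriv (fun z => u z t)) y)
      = fun y => Real.exp (v * y) * (a1 * ((2 * v) * ((2 * v) * c))) := by
    funext y
    rw [huxx, hEI, mul_assoc a1, ← mul_assoc (Real.exp (-v * y)), ← Real.exp_add]
    ring_nf
  have hEIterm : deriv (deriv (fun y => EI y * deriv (deriv (fun z => u z t)) y))
      = fun y => Real.exp (v * y) * (v * (v * (a1 * ((2 * v) * ((2 * v) * c))))) := by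
    rw [hEIfun, deriv_exp_mul_const, deriv_exp_mul_const]
  -- T term
  have hTfun : (fun y => T y * deriv (fun z => u z t) y)
      = fun y => Real.exp (v * y) * (2 * a1 * v ^ 2 * ((2 * v) * c)) := by
    funext y
    rw [hux, hT, mul_assoc (2 * a1 * v ^ 2), ← mul_assoc (Real.exp (-v * y)), ← Real.exp_add]
    ring_nf
  have hTterm : deriv (fun y => T y * deriv (fun z => u z t) y)
      = fun y => Real.exp (v * y) * (v * (2 * a1 * v ^ 2 * ((2 * v) * c))) := by
    rw [hTfun, deriv_exp_mul_const]
  -- time term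
  have ht : (fun s => u x s) = fun s => Real.exp (2 * v * x) * (A1 + A2 * s) := by
    funext s; rw [hu]
  have htt : deriv (deriv (fun s => u x s)) t = 0 := by
    rw [ht, deriv_lin, deriv_const']
  unfold beamLHS
  rw [hEIterm, hTterm, htt]
  ring
end

section
/- Let v ≠ 0 and a1 ≠ 0 be real, let m: ℝ → ℝ be any continuous function, and define EI(x) = a1·e^{−v·x} and T(x) = 2·a1·v²·e^{−v·x}. Let s, A1, A2 be real with (A1, A2) ≠ (0,0). Then u(x,t) = e^{s·x}·(A1 + A2·t) satisfies the Euler–Bernoulli beam equation with axial load at every (x,t) ∈ ℝ² if and only if s·(s − v)·(s − 2v)·(s + v) = 0. -/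
lemma deriv_aexp (a b : ℝ) :
    deriv (fun y => a * Real.exp (b * y)) = fun x => a * b * Real.exp (b * x) := by
  funext x
  have h : HasDerivAt (fun y => a * Real.exp (b * y))
      (a * (Real.exp (b * x) * (b * 1))) x :=
    (((hasDerivAt_id x).const_mul b).exp).const_mul a
  rw [h.deriv]; ring

lemma beam_key_s6 (v a1 : ℝ)
    (m : ℝ → ℝ) (EI T : ℝ → ℝ)
    (hEI : ∀ x, EI x = a1 * Real.exp (-v * x))
    (hT : ∀ x, T x = 2 * a1 * v ^ 2 * Real.exp (-v * x))
    (s A1 A2 : ℝ) :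
    ∀ x t : ℝ,
      beamLHS EI m T (fun x t => Real.exp (s * x) * (A1 + A2 * t)) x t
        = a1 * (s * (s - v) * (s - 2 * v) * (s + v)) * Real.exp ((s - v) * x)
            * (A1 + A2 * t) := by
  intro x t
  set c := A1 + A2 * t with hc
  have hu : (fun z => (fun x t => Real.exp (s * x) * (A1 + A2 * t)) z t)
      = fun z => c * Real.exp (s * z) := by funext z; simp only; ring
  have hdd : deriv (deriv (fun z => (fun x t => Real.exp (s * x) * (A1 + A2 * t)) z t))
      = fun z => c * s * s * Real.exp (s * z) := by
    rw [hu, deriv_aexp]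
    have : (fun x => c * s * Real.exp (s * x)) = fun y => (c * s) * Real.exp (s * y) := rfl
    rw [this, deriv_aexp]
  have hd1 : deriv (fun z => (fun x t => Real.exp (s * x) * (A1 + A2 * t)) z t)
      = fun z => c * s * Real.exp (s * z) := by rw [hu, deriv_aexp]
  have hf : (fun y => EI y * deriv (deriv (fun z => (fun x t => Real.exp (s * x) * (A1 + A2 * t)) z t)) y)
      = fun y => (a1 * c * s * s) * Real.exp ((s - v) * y) := by
    funext y
    rw [hdd, hEI, show (s - v) * y = -v * y + s * y by ring, Real.exp_add]; ring
  have hA' : deriv (deriv (fun y => EI y * deriv (deriv (fun z => (fun x t => Real.exp (s * x) * (A1 + A2 * t)) z t)) y)) x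
      = a1 * c * s * s * (s - v) * (s - v) * Real.exp ((s - v) * x) := by
    rw [hf, deriv_aexp]
    have : (fun x => a1 * c * s * s * (s - v) * Real.exp ((s - v) * x))
        = fun y => (a1 * c * s * s * (s - v)) * Real.exp ((s - v) * y) := rfl
    rw [this, deriv_aexp]
  have ht1 : deriv (fun s' => (fun x t => Real.exp (s * x) * (A1 + A2 * t)) x s')
      = fun _ => Real.exp (s * x) * A2 := by
    funext t'
    have h : HasDerivAt (fun s' => Real.exp (s * x) * (A1 + A2 * s'))
        (Real.exp (s * x) * (A2 * 1)) t' :=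
      (((hasDerivAt_id t').const_mul A2).const_add A1).const_mul _
    rw [h.deriv]; ring
  have ht2 : deriv (deriv (fun s' => (fun x t => Real.exp (s * x) * (A1 + A2 * t)) x s')) t = 0 := by
    rw [ht1]; simp
  have hg : (fun y => T y * deriv (fun z => (fun x t => Real.exp (s * x) * (A1 + A2 * t)) z t) y)
      = fun y => (2 * a1 * v ^ 2 * c * s) * Real.exp ((s - v) * y) := by
    funext y
    rw [hd1, hT, show (s - v) * y = -v * y + s * y by ring, Real.exp_add]; ring
  have hC : deriv (fun y => T y * deriv (fun z => (fun x t => Real.exp (s * x) * (A1 + A2 * t)) z t) y) x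
      = 2 * a1 * v ^ 2 * c * s * (s - v) * Real.exp ((s - v) * x) := by
    rw [hg, deriv_aexp]
  unfold beamLHS
  rw [hA', ht2, hC]; ring

/-- Characterization of exponential solutions in case (b): with
`EI(x) = a1·e^{−v·x}`, `T(x) = 2·a1·v²·e^{−v·x}` and any continuous mass `m`,
`u(x,t) = e^{s·x}·(A1 + A2·t)` (with `(A1,A2) ≠ (0,0)`) solves the beam equation
everywhere iff `s·(s − v)·(s − 2v)·(s + v) = 0`. -/
theorem beam_case_b_characterization (v a1 : ℝ) (hv : v ≠ 0) (ha1 : a1 ≠ 0)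
    (m : ℝ → ℝ) (hm : Continuous m) (EI T : ℝ → ℝ)
    (hEI : ∀ x, EI x = a1 * Real.exp (-v * x))
    (hT : ∀ x, T x = 2 * a1 * v ^ 2 * Real.exp (-v * x))
    (s A1 A2 : ℝ) (hA : (A1, A2) ≠ (0, 0)) :
    (∀ x t : ℝ,
        beamLHS EI m T (fun x t => Real.exp (s * x) * (A1 + A2 * t)) x t = 0) ↔
      s * (s - v) * (s - 2 * v) * (s + v) = 0 := by
  constructor
  · intro h
    -- find t₀ with A1 + A2 * t₀ ≠ 0
    obtain ⟨t₀, ht₀⟩ : ∃ t₀ : ℝ, A1 + A2 * t₀ ≠ 0 := by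
      by_cases hA2 : A2 = 0
      · refine ⟨0, ?_⟩
        have hA1 : A1 ≠ 0 := by
          intro hA1; exact hA ((Prod.mk.injEq _ _ _ _).mpr ⟨hA1, hA2⟩)
        simpa [hA2] using hA1
      · exact ⟨(1 - A1) / A2, by field_simp; intro h; linarith⟩
    have := h 0 t₀
    rw [beam_key_s6 v a1 m EI T hEI hT s A1 A2 0 t₀] at this
    have hexp : Real.exp ((s - v) * 0) ≠ 0 := Real.exp_ne_zero _
    rcases mul_eq_zero.mp this with h' | h'
    · rcases mul_eq_zero.mp h' with h'' | h''
      · rcases mul_eq_zero.mp h'' with h''' | h'''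
        · exact absurd h''' ha1
        · exact h'''
      · exact absurd h'' hexp
    · exact absurd h' ht₀
  · intro h x t
    rw [beam_key_s6 v a1 m EI T hEI hT s A1 A2 x t, h]; ring
end

section
/- Let a0, a1, T1, n, q be real numbers with a1 ≠ 0 and n ≠ 2, and define EI(x) = (a0 + a1·x)^n and T(x) = T1·(a0 + a1·x)^{n−2}/(a1·(n−2)) on the domain D = {x ∈ ℝ : a0 + a1·x > 0}. Then the power function w(x) = (a0 + a1·x)^q satisfies the static beam equation (EI(x)·w''(x))'' − (T(x)·w'(x))' = 0 on D if and only if q·(n + q − 3)·(a1³·(n−2)·(q−1)·(n + q − 2) − T1) = 0. -/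
open Topology Filter

lemma affine_hasDerivAt (a0 a1 x : ℝ) : HasDerivAt (fun y : ℝ => a0 + a1 * y) a1 x := by
  simpa using ((hasDerivAt_id x).const_mul a1).const_add a0

lemma deriv_affine_rpow (a0 a1 c p r d x : ℝ) (hx : 0 < a0 + a1 * x)
    (hr : r = p - 1) (hd : d = c * p * a1) :
    deriv (fun y => c * (a0 + a1 * y) ^ p) x = d * (a0 + a1 * x) ^ r := by
  have h2 : HasDerivAt (fun y => c * (a0 + a1 * y) ^ p)
      (c * (p * (a0 + a1 * x) ^ (p - 1) * a1)) x := by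
    simpa [Function.comp] using
      ((Real.hasDerivAt_rpow_const (p := p) (Or.inl hx.ne')).comp x
        (affine_hasDerivAt a0 a1 x)).const_mul c
  rw [h2.deriv, hr, hd]; ring

lemma beam_key_s7 (a0 a1 T1 n q : ℝ) (ha1 : a1 ≠ 0) (hn : n ≠ 2) (x : ℝ)
    (hx : 0 < a0 + a1 * x) :
    deriv (deriv (fun y => (a0 + a1 * y) ^ n *
        deriv (deriv (fun z => (a0 + a1 * z) ^ q)) y)) x
      - deriv (fun y => T1 * (a0 + a1 * y) ^ (n - 2) / (a1 * (n - 2)) *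
          deriv (fun z => (a0 + a1 * z) ^ q) y) x
    = (a0 + a1 * x) ^ (n + q - 4) * (a1 / (n - 2)) *
        (q * (n + q - 3) * (a1 ^ 3 * (n - 2) * (q - 1) * (n + q - 2) - T1)) := by
  have hn2 : n - 2 ≠ 0 := sub_ne_zero.mpr hn
  have hS : IsOpen {y : ℝ | 0 < a0 + a1 * y} :=
    isOpen_lt continuous_const (by continuity)
  have memS : ∀ {y : ℝ}, 0 < a0 + a1 * y → {y : ℝ | 0 < a0 + a1 * y} ∈ 𝓝 y :=
    fun h => hS.mem_nhds h
  -- first derivative of w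
  have dw : ∀ y : ℝ, 0 < a0 + a1 * y →
      deriv (fun z => (a0 + a1 * z) ^ q) y = (q * a1) * (a0 + a1 * y) ^ (q - 1) := by
    intro y hy
    have : (fun z : ℝ => (a0 + a1 * z) ^ q) = fun z => 1 * (a0 + a1 * z) ^ q := by
      funext z; ring
    rw [this]
    exact deriv_affine_rpow a0 a1 1 q (q - 1) (q * a1) y hy rfl (by ring)
  -- second derivative of w
  have ddw : ∀ y : ℝ, 0 < a0 + a1 * y →
      deriv (deriv (fun z => (a0 + a1 * z) ^ q)) y
        = (q * (q - 1) * a1 ^ 2) * (a0 + a1 * y) ^ (q - 2) := by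
    intro y hy
    have hev : deriv (fun z => (a0 + a1 * z) ^ q)
        =ᶠ[𝓝 y] fun z => (q * a1) * (a0 + a1 * z) ^ (q - 1) :=
      Filter.eventuallyEq_of_mem (memS hy) (fun z hz => dw z hz)
    rw [hev.deriv_eq]
    exact deriv_affine_rpow a0 a1 (q * a1) (q - 1) (q - 2) (q * (q - 1) * a1 ^ 2) y hy
      (by ring) (by ring)
  -- EI * w''
  have hF : ∀ y : ℝ, 0 < a0 + a1 * y →
      (a0 + a1 * y) ^ n * deriv (deriv (fun z => (a0 + a1 * z) ^ q)) y
        = (q * (q - 1) * a1 ^ 2) * (a0 + a1 * y) ^ (n + q - 2) := by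
    intro y hy
    rw [ddw y hy, show n + q - 2 = n + (q - 2) by ring, Real.rpow_add hy]
    ring
  -- first derivative of EI*w''
  have dF : ∀ y : ℝ, 0 < a0 + a1 * y →
      deriv (fun z => (a0 + a1 * z) ^ n *
          deriv (deriv (fun z => (a0 + a1 * z) ^ q)) z) y
        = (q * (q - 1) * a1 ^ 3 * (n + q - 2)) * (a0 + a1 * y) ^ (n + q - 3) := by
    intro y hy
    have hev : (fun z => (a0 + a1 * z) ^ n *
          deriv (deriv (fun z => (a0 + a1 * z) ^ q)) z)
        =ᶠ[𝓝 y] fun z => (q * (q - 1) * a1 ^ 2) * (a0 + a1 * z) ^ (n + q - 2) :=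
      Filter.eventuallyEq_of_mem (memS hy) (fun z hz => hF z hz)
    rw [hev.deriv_eq]
    exact deriv_affine_rpow a0 a1 (q * (q - 1) * a1 ^ 2) (n + q - 2) (n + q - 3)
      (q * (q - 1) * a1 ^ 3 * (n + q - 2)) y hy (by ring) (by ring)
  -- second derivative of EI*w''
  have ddF : deriv (deriv (fun z => (a0 + a1 * z) ^ n *
        deriv (deriv (fun z => (a0 + a1 * z) ^ q)) z)) x
      = (q * (q - 1) * a1 ^ 4 * (n + q - 2) * (n + q - 3)) * (a0 + a1 * x) ^ (n + q - 4) := by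
    have hev : deriv (fun z => (a0 + a1 * z) ^ n *
          deriv (deriv (fun z => (a0 + a1 * z) ^ q)) z)
        =ᶠ[𝓝 x] fun z => (q * (q - 1) * a1 ^ 3 * (n + q - 2)) * (a0 + a1 * z) ^ (n + q - 3) :=
      Filter.eventuallyEq_of_mem (memS hx) (fun z hz => dF z hz)
    rw [hev.deriv_eq]
    exact deriv_affine_rpow a0 a1 (q * (q - 1) * a1 ^ 3 * (n + q - 2)) (n + q - 3) (n + q - 4)
      (q * (q - 1) * a1 ^ 4 * (n + q - 2) * (n + q - 3)) x hx (by ring) (by ring)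
  -- T * w'
  have hH : ∀ y : ℝ, 0 < a0 + a1 * y →
      T1 * (a0 + a1 * y) ^ (n - 2) / (a1 * (n - 2)) *
          deriv (fun z => (a0 + a1 * z) ^ q) y
        = (T1 * q / (n - 2)) * (a0 + a1 * y) ^ (n + q - 3) := by
    intro y hy
    rw [dw y hy, show n + q - 3 = (n - 2) + (q - 1) by ring, Real.rpow_add hy]
    field_simp
  have dH : deriv (fun y => T1 * (a0 + a1 * y) ^ (n - 2) / (a1 * (n - 2)) *
        deriv (fun z => (a0 + a1 * z) ^ q) y) x
      = (T1 * q * a1 * (n + q - 3) / (n - 2)) * (a0 + a1 * x) ^ (n + q - 4) := by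
    have hev : (fun y => T1 * (a0 + a1 * y) ^ (n - 2) / (a1 * (n - 2)) *
          deriv (fun z => (a0 + a1 * z) ^ q) y)
        =ᶠ[𝓝 x] fun z => (T1 * q / (n - 2)) * (a0 + a1 * z) ^ (n + q - 3) :=
      Filter.eventuallyEq_of_mem (memS hx) (fun z hz => hH z hz)
    rw [hev.deriv_eq]
    exact deriv_affine_rpow a0 a1 (T1 * q / (n - 2)) (n + q - 3) (n + q - 4)
      (T1 * q * a1 * (n + q - 3) / (n - 2)) x hx (by ring) (by ring)
  rw [ddF, dH]
  field_simp

/-- With `EI(x) = (a0 + a1x)^n` and `T(x) = T1·(a0 + a1x)^{n−2}/(a1(n−2))` on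
`D = {x : a0 + a1x > 0}` (with `a1 ≠ 0`, `n ≠ 2`), the power function
`w(x) = (a0 + a1x)^q` satisfies the static beam equation on `D` iff
`q·(n + q − 3)·(a1³(n−2)(q−1)(n + q − 2) − T1) = 0`. -/
theorem static_beam_power_solutions (a0 a1 T1 n q : ℝ)
    (ha1 : a1 ≠ 0) (hn : n ≠ 2) :
    (∀ x : ℝ, a0 + a1 * x > 0 →
        staticBeamLHS (fun y => (a0 + a1 * y) ^ n)
          (fun y => T1 * (a0 + a1 * y) ^ (n - 2) / (a1 * (n - 2)))
          (fun y => (a0 + a1 * y) ^ q) x = 0) ↔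
      q * (n + q - 3) * (a1 ^ 3 * (n - 2) * (q - 1) * (n + q - 2) - T1) = 0 := by
  have hn2 : n - 2 ≠ 0 := sub_ne_zero.mpr hn
  have hkey : ∀ x : ℝ, 0 < a0 + a1 * x →
      staticBeamLHS (fun y => (a0 + a1 * y) ^ n)
          (fun y => T1 * (a0 + a1 * y) ^ (n - 2) / (a1 * (n - 2)))
          (fun y => (a0 + a1 * y) ^ q) x
        = (a0 + a1 * x) ^ (n + q - 4) * (a1 / (n - 2)) *
            (q * (n + q - 3) * (a1 ^ 3 * (n - 2) * (q - 1) * (n + q - 2) - T1)) := by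
    intro x hx
    simpa [staticBeamLHS] using beam_key_s7 a0 a1 T1 n q ha1 hn x hx
  constructor
  · intro h
    have hx0 : a0 + a1 * ((1 - a0) / a1) = 1 := by field_simp; ring
    have h1 := h ((1 - a0) / a1) (by rw [hx0]; norm_num)
    rw [hkey _ (by rw [hx0]; norm_num), hx0, Real.one_rpow, one_mul] at h1
    have ha : a1 / (n - 2) ≠ 0 := div_ne_zero ha1 hn2
    exact (mul_eq_zero.mp h1).resolve_left ha
  · intro h x hx
    rw [hkey x hx, h, mul_zero]
end

section
/- Let a0 ∈ ℝ, a1 > 0, n > 3, and let T1 ∈ ℝ be such that Δ := a1³·(n−2)·(n−1)² + 4·T1 > 0. Set σ = √Δ/(a1^{3/2}·√(n−2)) and q± = (3 − n ± σ)/2. Define EI(x) = (a0 + a1·x)^n and T(x) = T1·(a0 + a1·x)^{n−2}/(a1·(n−2)), and let m be any continuous function. Then for all real constants c1, c2, c3, the function u(x,t) = 2t + c1·(a0 + a1·x)^{q+} + c2·(a0 + a1·x)^{q−} + c3·(a0 + a1·x)^{3−n} satisfies the Euler–Bernoulli beam equation with axial load at every x with a0 + a1·x > 0 and every t ∈ ℝ.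 (This is case (c) of Table 1, whose solution is u(x,t) = 2t + G(x) with G given by equation (22) of the paper.) -/
noncomputable def P3 (a0 a1 C k1 q1 k2 q2 k3 q3 : ℝ) (y : ℝ) : ℝ :=
  C + k1 * (a0 + a1 * y) ^ q1 + k2 * (a0 + a1 * y) ^ q2 + k3 * (a0 + a1 * y) ^ q3

lemma hasDerivAt_affpow (a0 a1 k q x : ℝ) (h : 0 < a0 + a1 * x) :
    HasDerivAt (fun y => k * (a0 + a1 * y) ^ q) (a1 * k * q * (a0 + a1 * x) ^ (q - 1)) x := by
  have h1 : HasDerivAt (fun y : ℝ => a0 + a1 * y) a1 x := by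
    simpa using ((hasDerivAt_id x).const_mul a1).const_add a0
  have h2 := (Real.hasDerivAt_rpow_const (x := a0 + a1 * x) (p := q) (Or.inl h.ne')).comp x h1
  exact (h2.const_mul k).congr_deriv (by ring)

lemma hasDerivAt_P3 (a0 a1 C k1 q1 k2 q2 k3 q3 x : ℝ) (h : 0 < a0 + a1 * x) :
    HasDerivAt (P3 a0 a1 C k1 q1 k2 q2 k3 q3)
      (P3 a0 a1 0 (a1 * k1 * q1) (q1 - 1) (a1 * k2 * q2) (q2 - 1) (a1 * k3 * q3) (q3 - 1) x) x := by
  unfold P3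
  have := ((((hasDerivAt_affpow a0 a1 k1 q1 x h).const_add C).add
      (hasDerivAt_affpow a0 a1 k2 q2 x h)).add (hasDerivAt_affpow a0 a1 k3 q3 x h))
  exact this.congr_deriv (by ring)

lemma deriv_P3 (a0 a1 C k1 q1 k2 q2 k3 q3 x : ℝ) (h : 0 < a0 + a1 * x) :
    deriv (P3 a0 a1 C k1 q1 k2 q2 k3 q3) x
      = P3 a0 a1 0 (a1 * k1 * q1) (q1 - 1) (a1 * k2 * q2) (q2 - 1) (a1 * k3 * q3) (q3 - 1) x :=
  (hasDerivAt_P3 a0 a1 C k1 q1 k2 q2 k3 q3 x h).deriv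

lemma evpos (a0 a1 x : ℝ) (h : 0 < a0 + a1 * x) : ∀ᶠ y in nhds x, 0 < a0 + a1 * y := by
  have hc : Continuous fun y : ℝ => a0 + a1 * y := by continuity
  exact hc.continuousAt.eventually (eventually_gt_nhds h)

lemma deriv2_P3 (a0 a1 C k1 q1 k2 q2 k3 q3 x : ℝ) (h : 0 < a0 + a1 * x) :
    deriv (deriv (P3 a0 a1 C k1 q1 k2 q2 k3 q3)) x
      = P3 a0 a1 0 (a1 * (a1 * k1 * q1) * (q1 - 1)) (q1 - 1 - 1)
          (a1 * (a1 * k2 * q2) * (q2 - 1)) (q2 - 1 - 1)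
          (a1 * (a1 * k3 * q3) * (q3 - 1)) (q3 - 1 - 1) x := by
  have h1 : deriv (P3 a0 a1 C k1 q1 k2 q2 k3 q3)
      =ᶠ[nhds x] P3 a0 a1 0 (a1 * k1 * q1) (q1 - 1) (a1 * k2 * q2) (q2 - 1) (a1 * k3 * q3) (q3 - 1) :=
    (evpos a0 a1 x h).mono fun y hy => deriv_P3 a0 a1 C k1 q1 k2 q2 k3 q3 y hy
  rw [h1.deriv_eq, deriv_P3 _ _ _ _ _ _ _ _ _ _ h]



/-- Case (c) of Table 1 (solution `u = 2t + G(x)`, eq. (22) of the paper): with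
`EI(x) = (a0 + a1x)^n`, `T(x) = T1(a0 + a1x)^{n−2}/(a1(n−2))`, `a1 > 0`, `n > 3`,
`Δ = a1³(n−2)(n−1)² + 4T1 > 0`, `σ = √Δ/(a1^{3/2}√(n−2))`, `q± = (3 − n ± σ)/2`,
and any continuous mass `m`, the function
`u(x,t) = 2t + c1(a0+a1x)^{q+} + c2(a0+a1x)^{q−} + c3(a0+a1x)^{3−n}` satisfies the
axially loaded beam equation wherever `a0 + a1x > 0`. -/
theorem beam_case_c_solution (a0 a1 n T1 Δ σ qp qm : ℝ)
    (ha1 : 0 < a1) (hn : 3 < n)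
    (hΔdef : Δ = a1 ^ 3 * (n - 2) * (n - 1) ^ 2 + 4 * T1) (hΔpos : 0 < Δ)
    (hσ : σ = Real.sqrt Δ / (a1 ^ ((3 : ℝ) / 2) * Real.sqrt (n - 2)))
    (hqp : qp = (3 - n + σ) / 2) (hqm : qm = (3 - n - σ) / 2)
    (EI T : ℝ → ℝ) (m : ℝ → ℝ) (hm : Continuous m)
    (hEI : ∀ x, EI x = (a0 + a1 * x) ^ n)
    (hT : ∀ x, T x = T1 * (a0 + a1 * x) ^ (n - 2) / (a1 * (n - 2)))
    (c1 c2 c3 : ℝ) (u : ℝ → ℝ → ℝ)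
    (hu : ∀ x t, u x t = 2 * t + c1 * (a0 + a1 * x) ^ qp
        + c2 * (a0 + a1 * x) ^ qm + c3 * (a0 + a1 * x) ^ (3 - n)) :
    ∀ x : ℝ, a0 + a1 * x > 0 → ∀ t : ℝ, beamLHS EI m T u x t = 0 := by
  intro x hx t
  have hn2 : (0:ℝ) < n - 2 := by linarith
  have hn2' : (n:ℝ) - 2 ≠ 0 := hn2.ne'
  have ha1' : a1 ≠ 0 := ha1.ne'
  -- key algebraic identity for σ
  have ha32 : (a1 ^ ((3:ℝ)/2))^2 = a1^3 := by
    rw [← Real.rpow_natCast (a1 ^ ((3:ℝ)/2)) 2, ← Real.rpow_mul ha1.le,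
      show (3:ℝ)/2 * (2:ℕ) = ((3:ℕ):ℝ) by push_cast; ring, Real.rpow_natCast]
  have hσ2 : σ^2 = Δ / (a1^3 * (n-2)) := by
    rw [hσ, div_pow, mul_pow, ha32, Real.sq_sqrt hΔpos.le, Real.sq_sqrt hn2.le]
  have key : a1^3 * (n-2) * σ^2 = a1^3 * (n-1)^2 * (n-2) + 4*T1 := by
    rw [hσ2, hΔdef]
    field_simp
  have hclp : a1^3 * (qp-1) * (n+qp-2) * (n-2) = T1 := by
    rw [hqp]; linear_combination key / 4
  have hclm : a1^3 * (qm-1) * (n+qm-2) * (n-2) = T1 := by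
    rw [hqm]; linear_combination key / 4
  -- the function x ↦ u x t as a P3
  have huz : (fun z => u z t) = P3 a0 a1 (2*t) c1 qp c2 qm c3 (3-n) :=
    funext fun z => hu z t
  -- second x-derivative of u, pointwise on the positive set
  have hdd : ∀ y, 0 < a0 + a1 * y → deriv (deriv (fun z => u z t)) y
      = P3 a0 a1 0 (a1 * (a1 * c1 * qp) * (qp - 1)) (qp - 1 - 1)
          (a1 * (a1 * c2 * qm) * (qm - 1)) (qm - 1 - 1)
          (a1 * (a1 * c3 * (3-n)) * (3 - n - 1)) (3 - n - 1 - 1) y := by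
    intro y hy
    rw [huz]
    exact deriv2_P3 _ _ _ _ _ _ _ _ _ _ hy
  -- first x-derivative of u, pointwise
  have hd1 : ∀ y, 0 < a0 + a1 * y → deriv (fun z => u z t) y
      = P3 a0 a1 0 (a1 * c1 * qp) (qp - 1) (a1 * c2 * qm) (qm - 1) (a1 * c3 * (3-n)) (3 - n - 1) y := by
    intro y hy
    rw [huz]
    exact deriv_P3 _ _ _ _ _ _ _ _ _ _ hy
  -- EI * u_xx as P3
  have hEmul : (fun y => EI y * deriv (deriv (fun z => u z t)) y)
      =ᶠ[nhds x] P3 a0 a1 0 (a1 * (a1 * c1 * qp) * (qp - 1)) (n + (qp - 1 - 1))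
          (a1 * (a1 * c2 * qm) * (qm - 1)) (n + (qm - 1 - 1))
          (a1 * (a1 * c3 * (3-n)) * (3 - n - 1)) (n + (3 - n - 1 - 1)) := by
    refine (evpos a0 a1 x hx).mono fun y hy => ?_
    simp only [hdd y hy, hEI y]
    simp only [P3, Real.rpow_add hy]
    ring
  -- T * u_x as P3
  have hTmul : (fun y => T y * deriv (fun z => u z t) y)
      =ᶠ[nhds x] P3 a0 a1 0 (T1 * (a1 * c1 * qp) / (a1 * (n-2))) (n - 2 + (qp - 1))
          (T1 * (a1 * c2 * qm) / (a1 * (n-2))) (n - 2 + (qm - 1))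
          (T1 * (a1 * c3 * (3-n)) / (a1 * (n-2))) (n - 2 + (3 - n - 1)) := by
    refine (evpos a0 a1 x hx).mono fun y hy => ?_
    simp only [hd1 y hy, hT y]
    simp only [P3, Real.rpow_add hy]
    field_simp
    ring
  -- time derivatives
  have hts : (fun s => u x s) = fun s => 2 * s + c1 * (a0 + a1 * x) ^ qp
      + c2 * (a0 + a1 * x) ^ qm + c3 * (a0 + a1 * x) ^ (3 - n) := funext fun s => hu x s
  have htd : deriv (fun s => u x s) = fun _ => (2:ℝ) := by
    funext s
    rw [hts]
    have : HasDerivAt (fun s : ℝ => 2 * s + c1 * (a0 + a1 * x) ^ qp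
        + c2 * (a0 + a1 * x) ^ qm + c3 * (a0 + a1 * x) ^ (3 - n)) 2 s := by
      simpa using ((((hasDerivAt_id s).const_mul 2).add_const
        (c1 * (a0 + a1 * x) ^ qp)).add_const (c2 * (a0 + a1 * x) ^ qm)).add_const
        (c3 * (a0 + a1 * x) ^ (3 - n))
    exact this.deriv
  have htt : deriv (deriv (fun s => u x s)) t = 0 := by
    rw [htd]; simp
  -- assemble
  unfold beamLHS
  rw [htt, hEmul.deriv.deriv_eq, hTmul.deriv_eq,
    deriv2_P3 _ _ _ _ _ _ _ _ _ _ hx, deriv_P3 _ _ _ _ _ _ _ _ _ _ hx]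
  simp only [P3]
  rw [show n + (qp - 1 - 1) - 1 - 1 = n + qp - 4 by ring,
      show n + (qm - 1 - 1) - 1 - 1 = n + qm - 4 by ring,
      show n + (3 - n - 1 - 1) - 1 - 1 = (-1:ℝ) by ring,
      show n - 2 + (qp - 1) - 1 = n + qp - 4 by ring,
      show n - 2 + (qm - 1) - 1 = n + qm - 4 by ring,
      show n - 2 + (3 - n - 1) - 1 = (-1:ℝ) by ring]
  have h1 : a1 * (a1 * (a1 * (a1 * c1 * qp) * (qp - 1)) * (n + (qp - 1 - 1))) * (n + (qp - 1 - 1) - 1)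
      = a1 * (T1 * (a1 * c1 * qp) / (a1 * (n-2))) * (n - 2 + (qp - 1)) := by
    rw [← hclp]
    field_simp
    ring
  have h2 : a1 * (a1 * (a1 * (a1 * c2 * qm) * (qm - 1)) * (n + (qm - 1 - 1))) * (n + (qm - 1 - 1) - 1)
      = a1 * (T1 * (a1 * c2 * qm) / (a1 * (n-2))) * (n - 2 + (qm - 1)) := by
    rw [← hclm]
    field_simp
    ring
  have h3l : a1 * (a1 * (a1 * (a1 * c3 * (3-n)) * (3 - n - 1)) * (n + (3 - n - 1 - 1))) * (n + (3 - n - 1 - 1) - 1) = 0 := by ring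
  have h3r : a1 * (T1 * (a1 * c3 * (3-n)) / (a1 * (n-2))) * (n - 2 + (3 - n - 1)) = 0 := by
    field_simp
    ring
  linear_combination ((a0 + a1 * x) ^ (n + qp - 4)) * h1 + ((a0 + a1 * x) ^ (n + qm - 4)) * h2
    + ((a0 + a1 * x) ^ (-1:ℝ)) * h3l - ((a0 + a1 * x) ^ (-1:ℝ)) * h3r
end

section
/- Let EI: (α,β) → (0,∞) be three times differentiable and let f0 be a real number. Define ξ(x) = f0·(EI(x))^{1/3}. Then for every x ∈ (α,β), −2·ξ(x)·(EI'(x))²/EI(x) + 2·ξ(x)·EI''(x) + 2·EI'(x)·ξ'(x) − 6·EI(x)·ξ''(x) = 0. (This shows that ξ = f0·EI^{1/3} solves the determining equation (12) of the Lie symmetry analysis in the case where the coefficient of u in the infinitesimal η is constant, so that ∂²η/∂x∂u = 0.) -/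
/-- The infinitesimal `ξ = f0·EI^{1/3}` solves the determining equation (12) of the
Lie symmetry analysis of the axially loaded beam, in the case where the coefficient
of `u` in the infinitesimal `η` is constant (so `∂²η/∂x∂u = 0`): for `EI` positive
and three times differentiable on `(α, β)`,
`−2ξ(EI')²/EI + 2ξ·EI'' + 2EI'·ξ' − 6EI·ξ'' = 0` on `(α, β)`. -/
theorem xi_cube_root_solves_determining_equation (α β f0 : ℝ) (EI ξ : ℝ → ℝ)
    (hpos : ∀ x ∈ Set.Ioo α β, 0 < EI x)
    (hd1 : ∀ x ∈ Set.Ioo α β, DifferentiableAt ℝ EI x)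
    (hd2 : ∀ x ∈ Set.Ioo α β, DifferentiableAt ℝ (deriv EI) x)
    (hd3 : ∀ x ∈ Set.Ioo α β, DifferentiableAt ℝ (deriv (deriv EI)) x)
    (hξ : ∀ x, ξ x = f0 * EI x ^ ((1 : ℝ) / 3)) :
    ∀ x ∈ Set.Ioo α β,
      -2 * ξ x * (deriv EI x) ^ 2 / EI x + 2 * ξ x * deriv (deriv EI) x
        + 2 * deriv EI x * deriv ξ x - 6 * EI x * deriv (deriv ξ) x = 0 := by
  have hopen : IsOpen (Set.Ioo α β) := isOpen_Ioo
  set P : ℝ → ℝ := fun x => f0 * (((1:ℝ)/3) * EI x ^ ((1:ℝ)/3 - 1) * deriv EI x) with hP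
  have hξfun : ξ = fun x => f0 * EI x ^ ((1:ℝ)/3) := funext hξ
  have hderiv1 : ∀ x ∈ Set.Ioo α β, HasDerivAt ξ (P x) x := by
    intro x hx
    have h := ((hd1 x hx).hasDerivAt.rpow_const (p := (1:ℝ)/3)
      (Or.inl (ne_of_gt (hpos x hx)))).const_mul f0
    rw [hξfun]
    convert h using 1
    rfl; rfl; simp only [hP]
    ring
  have hderivξ : ∀ x ∈ Set.Ioo α β, deriv ξ x = P x := fun x hx =>
    (hderiv1 x hx).deriv
  intro x hx
  have hE := hpos x hx
  have hEne := ne_of_gt hE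
  -- second derivative
  have hPd : HasDerivAt P
      (f0 * (((1:ℝ)/3) * ((((1:ℝ)/3 - 1) * EI x ^ ((1:ℝ)/3 - 1 - 1) * deriv EI x) * deriv EI x
        + EI x ^ ((1:ℝ)/3 - 1) * deriv (deriv EI) x))) x := by
    have h1 : HasDerivAt (fun y => EI y ^ ((1:ℝ)/3 - 1))
        (((1:ℝ)/3 - 1) * EI x ^ ((1:ℝ)/3 - 1 - 1) * deriv EI x) x := by
      have := (hd1 x hx).hasDerivAt.rpow_const (p := (1:ℝ)/3 - 1) (Or.inl hEne)
      convert this using 1; ring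
    have h2 := (hd2 x hx).hasDerivAt
    have := ((h1.mul h2).const_mul ((1:ℝ)/3)).const_mul f0
    convert this using 2 <;> first | rfl | (simp only [hP, Pi.mul_apply]; ring) | ring
  have hdd : deriv (deriv ξ) x = f0 * (((1:ℝ)/3) * ((((1:ℝ)/3 - 1) * EI x ^ ((1:ℝ)/3 - 1 - 1) * deriv EI x) * deriv EI x
        + EI x ^ ((1:ℝ)/3 - 1) * deriv (deriv EI) x)) := by
    have heq : deriv ξ =ᶠ[nhds x] P :=
      Filter.eventuallyEq_of_mem (hopen.mem_nhds hx) hderivξ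
    rw [heq.deriv_eq, hPd.deriv]
  rw [hderivξ x hx, hdd, hξ x]
  -- rpow identities
  set t := EI x ^ ((1:ℝ)/3) with ht
  have e1 : EI x ^ ((1:ℝ)/3 - 1) = t / EI x := by
    rw [Real.rpow_sub hE, Real.rpow_one]
  have e2 : EI x ^ ((1:ℝ)/3 - 1 - 1) = t / (EI x * EI x) := by
    rw [Real.rpow_sub hE, Real.rpow_sub hE, Real.rpow_one]
    ring
  simp only [hP]
  rw [e1, e2]
  field_simp
  ring
end

section
/- There exist real numbers m1 and m2 such that, setting W(x) = x + m1·x²/2 + m2·x³/3 and m(x) = 1 + m1·x + m2·x² (so m = W'), one has: (i) m(x) > 0 for all x ∈ [0,1]; (ii) W'(1)² + W(1)·W''(1) = 0, i.e. the second derivative of W² vanishes at x = 1; and (iii) 3·W'(1)·W''(1) + 2·W(1)·m2 = 0, i.e. the third derivative of W² vanishes at x = 1. Consequently every function of the form u(x,t) = W(x)²·F(t) satisfies the cantilever boundary conditions u(0,t) = 0, u_x(0,t) = 0 at the fixed end and the free-end boundary conditions u_xx(1,t) = 0, u_xxx(1,t) = 0. (The paper gives the explicit choice m1 ≈ −0.840295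 and m2 ≈ 0.277816 for m0 = 1.) -/
/-- Derivative of a generic degree-6 polynomial. -/
lemma deriv_poly6 (a b c d e f g : ℝ) :
    deriv (fun x : ℝ => a + b*x + c*x^2 + d*x^3 + e*x^4 + f*x^5 + g*x^6)
      = fun x : ℝ => b + 2*c*x + 3*d*x^2 + 4*e*x^3 + 5*f*x^4 + 6*g*x^5 := by
  funext x
  have h := (hasDerivAt_const x a).add
    (((hasDerivAt_id x).const_mul b).add
      (((hasDerivAt_pow 2 x).const_mul c).add
        (((hasDerivAt_pow 3 x).const_mul d).add
          (((hasDerivAt_pow 4 x).const_mul e).add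
            (((hasDerivAt_pow 5 x).const_mul f).add
              ((hasDerivAt_pow 6 x).const_mul g))))))
  have h2 : HasDerivAt (fun x : ℝ => a + b*x + c*x^2 + d*x^3 + e*x^4 + f*x^5 + g*x^6)
      (b + 2*c*x + 3*d*x^2 + 4*e*x^3 + 5*f*x^4 + 6*g*x^5) x := by
    convert h using 1
    · rfl
    · rfl
    · funext y; simp only [id_eq, Pi.add_apply]; ring
    · push_cast; ring
  exact h2.deriv

/-- There exist `m1, m2` (for `m0 = 1`) such that, with
`W(x) = x + m1x²/2 + m2x³/3` and `m(x) = 1 + m1x + m2x² = W'(x)`: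
(i) `m > 0` on `[0,1]`; (ii) `W'(1)² + W(1)W''(1) = 0` ((W²)''(1) = 0);
(iii) `3W'(1)W''(1) + 2W(1)m2 = 0` ((W²)'''(1) = 0); and consequently every
`u(x,t) = W(x)²·F(t)` satisfies the cantilever conditions `u(0,t) = 0`,
`u_x(0,t) = 0` and the free-end conditions `u_xx(1,t) = 0`, `u_xxx(1,t) = 0`.
(The paper: `m1 ≈ −0.840295`, `m2 ≈ 0.277816`.) -/
theorem cantilever_free_end_coefficients_exist :
    ∃ m1 m2 : ℝ,
      (∀ x ∈ Set.Icc (0 : ℝ) 1, 0 < 1 + m1 * x + m2 * x ^ 2)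
      ∧ (1 + m1 + m2) ^ 2 + (1 + m1 / 2 + m2 / 3) * (m1 + 2 * m2) = 0
      ∧ 3 * (1 + m1 + m2) * (m1 + 2 * m2) + 2 * (1 + m1 / 2 + m2 / 3) * m2 = 0
      ∧ (∀ F : ℝ → ℝ, ∀ t : ℝ,
          (fun x : ℝ => (x + m1 * x ^ 2 / 2 + m2 * x ^ 3 / 3) ^ 2 * F t) 0 = 0
          ∧ deriv (fun x : ℝ =>
              (x + m1 * x ^ 2 / 2 + m2 * x ^ 3 / 3) ^ 2 * F t) 0 = 0
          ∧ deriv (deriv (fun x : ℝ =>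
              (x + m1 * x ^ 2 / 2 + m2 * x ^ 3 / 3) ^ 2 * F t)) 1 = 0
          ∧ deriv (deriv (deriv (fun x : ℝ =>
              (x + m1 * x ^ 2 / 2 + m2 * x ^ 3 / 3) ^ 2 * F t))) 1 = 0) := by
  -- the quartic q(y) = 50y⁴ - 300y³ + 585y² - 432y + 81 has a root in [0.27, 0.28]
  set q : ℝ → ℝ := fun y => 50*y^4 - 300*y^3 + 585*y^2 - 432*y + 81 with hqdef
  have hcont : ContinuousOn q (Set.Icc (0.27 : ℝ) 0.28) := by
    apply Continuous.continuousOn; fun_prop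
  have hsub := intermediate_value_Icc' (by norm_num : (0.27 : ℝ) ≤ 0.28) hcont
  have h0mem : (0 : ℝ) ∈ Set.Icc (q 0.28) (q 0.27) := by
    constructor <;> · simp only [hqdef]; norm_num
  obtain ⟨m2, hm2mem, hq⟩ := hsub h0mem
  obtain ⟨hm2lo, hm2hi⟩ := hm2mem
  have hq : 50*m2^4 - 300*m2^3 + 585*m2^2 - 432*m2 + 81 = 0 := hq
  -- define m1
  have hDneg : 10*m2/3 - 3 < 0 := by nlinarith
  have hDne : 10*m2/3 - 3 ≠ 0 := ne_of_lt hDneg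
  set m1 : ℝ := (2 - 10*m2^2/3) / (10*m2/3 - 3) with hm1def
  have hm1D : m1 * (10*m2/3 - 3) = 2 - 10*m2^2/3 := by
    rw [hm1def, div_mul_cancel₀ _ hDne]
  have hm1neg : m1 < 0 := by nlinarith [hm1D]
  have hm1gt : -1 < m1 := by nlinarith [hm1D]
  refine ⟨m1, m2, ?_, ?_, ?_, ?_⟩
  · intro x hx
    obtain ⟨hx0, hx1⟩ := hx
    nlinarith [mul_nonneg (le_of_lt (by nlinarith : (0:ℝ) < m2)) (sq_nonneg x)]
  · -- eq1
    have h1 : (10*m2/3 - 3)^2 *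
        ((1 + m1 + m2) ^ 2 + (1 + m1 / 2 + m2 / 3) * (m1 + 2 * m2)) = 0 := by
      linear_combination (3/2*(m1*(10*m2/3-3) + (2 - 10*m2^2/3)) + (3 + 10/3*m2)*(10*m2/3-3)) * hm1D - (1/27)*hq
    have hD2 : (10*m2/3 - 3)^2 ≠ 0 := pow_ne_zero 2 hDne
    exact (mul_eq_zero.mp h1).resolve_left hD2
  · -- eq2
    have heq1 : (1 + m1 + m2) ^ 2 + (1 + m1 / 2 + m2 / 3) * (m1 + 2 * m2) = 0 := by
      have h1 : (10*m2/3 - 3)^2 *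
          ((1 + m1 + m2) ^ 2 + (1 + m1 / 2 + m2 / 3) * (m1 + 2 * m2)) = 0 := by
        linear_combination (3/2*(m1*(10*m2/3-3) + (2 - 10*m2^2/3)) + (3 + 10/3*m2)*(10*m2/3-3)) * hm1D - (1/27)*hq
      exact (mul_eq_zero.mp h1).resolve_left (pow_ne_zero 2 hDne)
    linear_combination 2 * heq1 + hm1D
  · -- derivative conditions
    have heq1 : (1 + m1 + m2) ^ 2 + (1 + m1 / 2 + m2 / 3) * (m1 + 2 * m2) = 0 := by
      have h1 : (10*m2/3 - 3)^2 *
          ((1 + m1 + m2) ^ 2 + (1 + m1 / 2 + m2 / 3) * (m1 + 2 * m2)) = 0 := by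
        linear_combination (3/2*(m1*(10*m2/3-3) + (2 - 10*m2^2/3)) + (3 + 10/3*m2)*(10*m2/3-3)) * hm1D - (1/27)*hq
      exact (mul_eq_zero.mp h1).resolve_left (pow_ne_zero 2 hDne)
    have heq2 : 3 * (1 + m1 + m2) * (m1 + 2 * m2) + 2 * (1 + m1 / 2 + m2 / 3) * m2 = 0 := by
      linear_combination 2 * heq1 + hm1D
    intro F t
    set c : ℝ := F t with hc
    have h0 : (fun x : ℝ => (x + m1 * x ^ 2 / 2 + m2 * x ^ 3 / 3) ^ 2 * c)
        = fun x : ℝ => 0 + 0*x + c*x^2 + (m1*c)*x^3 + ((m1^2/4 + 2*m2/3)*c)*x^4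
            + ((m1*m2/3)*c)*x^5 + ((m2^2/9)*c)*x^6 := funext fun x => by ring
    rw [h0, deriv_poly6]
    refine ⟨by norm_num, by norm_num, ?_, ?_⟩
    · rw [show (fun x : ℝ => 0 + 2*c*x + 3*(m1*c)*x^2 + 4*((m1^2/4 + 2*m2/3)*c)*x^3
          + 5*((m1*m2/3)*c)*x^4 + 6*((m2^2/9)*c)*x^5)
        = fun x : ℝ => 0 + (2*c)*x + (3*(m1*c))*x^2 + (4*((m1^2/4 + 2*m2/3)*c))*x^3
          + (5*((m1*m2/3)*c))*x^4 + (6*((m2^2/9)*c))*x^5 + 0*x^6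
        from funext fun x => by ring, deriv_poly6]
      simp only
      linear_combination (2*c) * heq1
    · rw [show (fun x : ℝ => 0 + 2*c*x + 3*(m1*c)*x^2 + 4*((m1^2/4 + 2*m2/3)*c)*x^3
          + 5*((m1*m2/3)*c)*x^4 + 6*((m2^2/9)*c)*x^5)
        = fun x : ℝ => 0 + (2*c)*x + (3*(m1*c))*x^2 + (4*((m1^2/4 + 2*m2/3)*c))*x^3
          + (5*((m1*m2/3)*c))*x^4 + (6*((m2^2/9)*c))*x^5 + 0*x^6
        from funext fun x => by ring, deriv_poly6]
      rw [show (fun x : ℝ => 2*c + 2*(3*(m1*c))*x + 3*(4*((m1^2/4 + 2*m2/3)*c))*x^2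
          + 4*(5*((m1*m2/3)*c))*x^3 + 5*(6*((m2^2/9)*c))*x^4 + 6*0*x^5)
        = fun x : ℝ => 2*c + (2*(3*(m1*c)))*x + (3*(4*((m1^2/4 + 2*m2/3)*c)))*x^2
          + (4*(5*((m1*m2/3)*c)))*x^3 + (5*(6*((m2^2/9)*c)))*x^4 + 0*x^5 + 0*x^6
        from funext fun x => by ring, deriv_poly6]
      simp only
      linear_combination (2*c) * heq2
end
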